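/- Let P be a finite poset. Birational antichain rowmotion and birational order rowmotion are intertwined by the down-transfer map: ∇ ∘ BOR = BAR ∘ ∇ as maps on positive labelings of P. -/

import Mathlib

/-!
Birational (commutative) antichain/order rowmotion on a finite poset `P`, with labels in `ℝ`
and positive labelings, following Joseph–Roby, "Birational and noncommutative lifts of
antichain toggling and rowmotion".
-/

open Finset

attribute [local instance] Classical.propDecidable

variable {P : Type*} [Fintype P] [PartialOrder P]

/-- `c` is a saturated chain in `P`: consecutive entries are covers. -/
def SatChain {P : Type*} [PartialOrder P] {k : ℕ} (c : Fin (k + 1) → P) : Prop :=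
  ∀ i : Fin k, c i.castSucc ⋖ c i.succ

/-- `c` is a maximal chain of `P`: a saturated chain from a minimal element to a maximal
element of `P` (equivalently, the restriction to `P` of a maximal chain
`0̂ ⋖ y₁ ⋖ ⋯ ⋖ y_k ⋖ 1̂` of `P̂`). -/
def MaxChain {P : Type*} [PartialOrder P] {k : ℕ} (c : Fin (k + 1) → P) : Prop :=
  SatChain c ∧ IsMin (c 0) ∧ IsMax (c (Fin.last k))

/-- `Υ_v(g)`: the sum over all maximal chains `(y₁, …, y_k)` of `P` through `v` of the
products `g(y₁)⋯g(y_k)` of the labels along the chain. -/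
noncomputable def Upsilon (g : P → ℝ) (v : P) : ℝ :=
  ∑ k ∈ range (Fintype.card P),
    ∑ c ∈ univ.filter (fun c : Fin (k + 1) → P => MaxChain c ∧ ∃ j, c j = v),
      (List.ofFn (g ∘ c)).prod

/-- The birational antichain toggle `τ_v`: it replaces the label at `v` by `C / Υ_v(g)` and
fixes all other labels. -/
noncomputable def atog (C : ℝ) (v : P) (g : P → ℝ) : P → ℝ :=
  fun x => if x = v then C / Upsilon g v else g x

/-- `∑_{y ∈ P̂, y ⋖ x} f(y)`, with the convention `f(0̂) = 1` (the unique lower cover in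
`P̂` of a minimal element of `P` is `0̂`). -/
noncomputable def lowSum (f : P → ℝ) (x : P) : ℝ :=
  (if IsMin x then 1 else 0) + ∑ y ∈ univ.filter (fun y => y ⋖ x), f y

/-- `∑_{y ∈ P̂, y ⋗ x} 1/f(y)`, with the convention `f(1̂) = C`. -/
noncomputable def upInvSum (C : ℝ) (f : P → ℝ) (x : P) : ℝ :=
  (if IsMax x then 1 / C else 0) + ∑ y ∈ univ.filter (fun y => x ⋖ y), 1 / f y

/-- The birational order toggle `T_v`: it replaces the label at `v` by
`(∑_{y ∈ P̂, y ⋖ v} f(y)) / (f(v) · ∑_{y ∈ P̂, y ⋗ v} 1/f(y))` (with `f(0̂) = 1`,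
`f(1̂) = C`) and fixes all other labels. -/
noncomputable def otog (C : ℝ) (v : P) (f : P → ℝ) : P → ℝ :=
  fun x => if x = v then lowSum f v / (f v * upInvSum C f v) else f x

/-- The birational complement map `Θ`: `(Θf)(x) = C / f(x)`. -/
noncomputable def thetaMap (C : ℝ) (f : P → ℝ) : P → ℝ := fun x => C / f x

/-- The birational down transfer `∇`: `(∇f)(x) = f(x) / ∑_{y ∈ P̂, y ⋖ x} f(y)` with
`f(0̂) = 1`. -/
noncomputable def nablaMap (f : P → ℝ) : P → ℝ := fun x => f x / lowSum f x

/-- The birational inverse up transfer `Δ⁻¹`: `(Δ⁻¹f)(x)` is the sum, over all saturated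
chains `x = y₁ ⋖ y₂ ⋖ ⋯ ⋖ y_k ⋖ 1̂` in `P̂` (i.e. saturated chains of `P` starting at `x`
and ending at a maximal element of `P`), of `f(y₁)f(y₂)⋯f(y_k)`. -/
noncomputable def deltaInvMap (f : P → ℝ) : P → ℝ := fun x =>
  ∑ k ∈ range (Fintype.card P),
    ∑ c ∈ univ.filter (fun c : Fin (k + 1) → P =>
        SatChain c ∧ c 0 = x ∧ IsMax (c (Fin.last k))),
      (List.ofFn (f ∘ c)).prod

/-- `l` is a linear extension of `P`: it lists every element of `P` exactly once, and
`l[i] < l[j]` in `P` implies `i < j`. -/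
def IsLinearExtension {P : Type*} [PartialOrder P] (l : List P) : Prop :=
  l.Nodup ∧ (∀ x : P, x ∈ l) ∧
    ∀ (i j : ℕ) (hi : i < l.length) (hj : j < l.length), l[i]'hi < l[j]'hj → i < j

/-- `l` is a linear extension of the subposet `A` of `P`. -/
def IsLinearExtensionOn {P : Type*} [PartialOrder P] (A : Set P) (l : List P) : Prop :=
  l.Nodup ∧ (∀ x : P, x ∈ l ↔ x ∈ A) ∧
    ∀ (i j : ℕ) (hi : i < l.length) (hj : j < l.length), l[i]'hi < l[j]'hj → i < j

/-- Apply the antichain toggles `τ` along the list `l`, first element of `l` first; for a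
linear extension `l = (x₁,…,xₙ)` this is `τ_{xₙ} ∘ ⋯ ∘ τ_{x₂} ∘ τ_{x₁}`, i.e. birational
antichain rowmotion `BAR`. -/
noncomputable def applyATogs (C : ℝ) (l : List P) (g : P → ℝ) : P → ℝ :=
  l.foldl (fun h v => atog C v h) g

/-- Apply the order toggles `T` along the list `l`, first element of `l` first. -/
noncomputable def applyOTogs (C : ℝ) (l : List P) (f : P → ℝ) : P → ℝ :=
  l.foldl (fun h v => otog C v h) f

/-- `rk` is a rank function exhibiting `P` as a graded poset of rank `r`: minimal elements
have rank `0`, ranks increase by `1` along covers, and maximal elements have rank `r`. -/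
def IsRankFunction {P : Type*} [PartialOrder P] (rk : P → ℕ) (r : ℕ) : Prop :=
  (∀ x : P, IsMin x → rk x = 0) ∧ (∀ x y : P, x ⋖ y → rk y = rk x + 1) ∧
    (∀ x : P, IsMax x → rk x = r)

/-! ### Auxiliary infrastructure -/

section ChainLists
set_option linter.unusedSectionVars false

attribute [local instance] Classical.propDecidable

/-- `SatChain` in terms of the associated list. -/
lemma satChain_iff_chain' {k : ℕ} (c : Fin (k + 1) → P) :
    SatChain c ↔ (List.ofFn c).Chain' (· ⋖ ·) := by
  show SatChain c ↔ List.IsChain _ _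
  rw [List.isChain_iff_getElem]
  constructor
  · intro h i hi
    have hi' : i < k := by simpa using hi
    rw [List.getElem_ofFn, List.getElem_ofFn]
    exact h ⟨i, hi'⟩
  · intro h i
    have hi : (i : ℕ) + 1 < (List.ofFn c).length := by
      simp only [List.length_ofFn]; omega
    have := h i hi
    rw [List.getElem_ofFn, List.getElem_ofFn] at this
    exact this

lemma chain'_pairwise {L : List P} (h : L.Chain' (· ⋖ ·)) : L.Pairwise (· < ·) := by
  have : L.Chain' (· < ·) := List.IsChain.imp (fun _ _ hab => hab.lt) h
  exact List.isChain_iff_pairwise.mp this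

lemma chain'_nodup {L : List P} (h : L.Chain' (· ⋖ ·)) : L.Nodup :=
  (chain'_pairwise h).imp ne_of_lt

lemma chain'_length_le {L : List P} (h : L.Chain' (· ⋖ ·)) :
    L.length ≤ Fintype.card P :=
  (chain'_nodup h).length_le_card

/-- The finset of all nonempty lists of elements of `P` of length at most `card P`. -/
noncomputable def chainLists (P : Type*) [Fintype P] [PartialOrder P] : Finset (List P) :=
  (Finset.range (Fintype.card P)).biUnion
    (fun k => (Finset.univ : Finset (Fin (k + 1) → P)).image List.ofFn)

lemma mem_chainLists {L : List P} :
    L ∈ chainLists P ↔ L ≠ [] ∧ L.length ≤ Fintype.card P := by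
  simp only [chainLists, Finset.mem_biUnion, Finset.mem_range, Finset.mem_image,
    Finset.mem_univ, true_and]
  constructor
  · rintro ⟨k, hk, c, rfl⟩
    constructor
    · simp [List.ofFn_succ]
    · simp only [List.length_ofFn]; omega
  · rintro ⟨hne, hlen⟩
    obtain ⟨k, hk⟩ : ∃ k, L.length = k + 1 := by
      cases L with
      | nil => exact absurd rfl hne
      | cons a t => exact ⟨t.length, rfl⟩
    refine ⟨k, by omega, fun i => L.get (Fin.cast hk.symm i), ?_⟩
    apply List.ext_get (by simp [hk])
    intro n h1 h2
    rw [List.get_ofFn]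
    rfl

/-- The master translation lemma from `Fin`-indexed chain sums to list sums. -/
lemma sum_chains_eq (Pl : List P → Prop) (Pfin : ∀ k : ℕ, (Fin (k + 1) → P) → Prop)
    (instL : DecidablePred Pl) (instF : ∀ k : ℕ, DecidablePred (Pfin k))
    (hiff : ∀ (k : ℕ) (c : Fin (k + 1) → P), Pfin k c ↔ Pl (List.ofFn c))
    (w : List P → ℝ) :
    (∑ k ∈ Finset.range (Fintype.card P),
      ∑ c ∈ @Finset.filter _ (Pfin k) (instF k) Finset.univ, w (List.ofFn c))
      = ∑ L ∈ @Finset.filter _ Pl instL (chainLists P), w L := by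
  classical
  rw [Finset.sum_filter]
  rw [chainLists, Finset.sum_biUnion]
  · refine Finset.sum_congr rfl (fun k _ => ?_)
    rw [Finset.sum_image (by intro a _ b _ h; exact List.ofFn_injective h)]
    rw [Finset.sum_filter]
    refine Finset.sum_congr rfl (fun c _ => ?_)
    exact if_congr (hiff k c) rfl rfl
  · intro a _ b _ hab
    simp only [Function.onFun, Finset.disjoint_left]
    intro L hL hL'
    simp only [Finset.mem_image, Finset.mem_univ, true_and] at hL hL'
    obtain ⟨c, rfl⟩ := hL
    obtain ⟨d, hd⟩ := hL'
    apply hab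
    have := congrArg List.length hd
    simpa using this.symm

end ChainLists
section ChainSets

attribute [local instance] Classical.propDecidable
set_option linter.unusedSectionVars false

/-- Saturated chains from `x` to a maximal element, as lists. -/
noncomputable def Dset (x : P) : Finset (List P) :=
  (chainLists P).filter (fun L => L.Chain' (· ⋖ ·) ∧ L.head? = some x ∧
    ∀ z ∈ L.getLast?, IsMax z)

/-- Saturated chains from a minimal element to `x`, as lists. -/
noncomputable def Uset (x : P) : Finset (List P) :=
  (chainLists P).filter (fun L => L.Chain' (· ⋖ ·) ∧ (∀ z ∈ L.head?, IsMin z) ∧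
    L.getLast? = some x)

/-- Maximal chains through `v`, as lists. -/
noncomputable def Mset (v : P) : Finset (List P) :=
  (chainLists P).filter (fun L => L.Chain' (· ⋖ ·) ∧ (∀ z ∈ L.head?, IsMin z) ∧
    (∀ z ∈ L.getLast?, IsMax z) ∧ v ∈ L)

lemma mem_of_chain' {L : List P} (hc : L.Chain' (· ⋖ ·)) (hne : L ≠ []) :
    L ∈ chainLists P :=
  mem_chainLists.mpr ⟨hne, chain'_length_le hc⟩

lemma mem_Dset {L : List P} {x : P} :
    L ∈ Dset x ↔ L.Chain' (· ⋖ ·) ∧ L.head? = some x ∧ ∀ z ∈ L.getLast?, IsMax z := by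
  unfold Dset
  rw [Finset.mem_filter]
  constructor
  · exact fun h => h.2
  · intro h
    refine ⟨mem_of_chain' h.1 ?_, h⟩
    intro hL; rw [hL] at h; simp at h

lemma mem_Uset {L : List P} {x : P} :
    L ∈ Uset x ↔ L.Chain' (· ⋖ ·) ∧ (∀ z ∈ L.head?, IsMin z) ∧ L.getLast? = some x := by
  unfold Uset
  rw [Finset.mem_filter]
  constructor
  · exact fun h => h.2
  · intro h
    refine ⟨mem_of_chain' h.1 ?_, h⟩
    intro hL; rw [hL] at h; simp at h

lemma mem_Mset {L : List P} {v : P} :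
    L ∈ Mset v ↔ L.Chain' (· ⋖ ·) ∧ (∀ z ∈ L.head?, IsMin z) ∧
      (∀ z ∈ L.getLast?, IsMax z) ∧ v ∈ L := by
  unfold Mset
  rw [Finset.mem_filter]
  constructor
  · exact fun h => h.2
  · intro h
    refine ⟨mem_of_chain' h.1 ?_, h⟩
    intro hL; rw [hL] at h; simp at h

/-- List-level inverse up transfer. -/
noncomputable def DnL (p : P → ℝ) (x : P) : ℝ := ∑ L ∈ Dset x, (L.map p).prod

/-- List-level weighted count of chains hitting `x` from below. -/
noncomputable def UpL (p : P → ℝ) (x : P) : ℝ := ∑ L ∈ Uset x, (L.map p).prod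

lemma head?_ofFn {k : ℕ} (c : Fin (k + 1) → P) : (List.ofFn c).head? = some (c 0) := by
  rw [List.ofFn_succ]; rfl

lemma getLast?_ofFn {k : ℕ} (c : Fin (k + 1) → P) :
    (List.ofFn c).getLast? = some (c (Fin.last k)) := by
  rw [List.ofFn_succ']
  simp [List.concat_eq_append, List.getLast?_concat]

lemma upsilon_eq_sum_Mset (p : P → ℝ) (v : P) :
    Upsilon p v = ∑ L ∈ Mset v, (L.map p).prod := by
  unfold Upsilon Mset
  simp only [← List.map_ofFn]
  refine sum_chains_eq _ _ _ _ ?_ (fun L => (L.map p).prod)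
  · intro k c
    unfold MaxChain
    rw [satChain_iff_chain', head?_ofFn, getLast?_ofFn, List.mem_ofFn]
    constructor
    · rintro ⟨⟨h1, h2, h3⟩, j, hj⟩
      exact ⟨h1, by simpa using h2, by simpa using h3, ⟨j, hj⟩⟩
    · rintro ⟨h1, h2, h3, j, hj⟩
      exact ⟨⟨h1, by simpa using h2, by simpa using h3⟩, j, hj⟩

lemma deltaInv_eq_DnL (p : P → ℝ) (x : P) : deltaInvMap p x = DnL p x := by
  unfold deltaInvMap DnL Dset
  simp only [← List.map_ofFn]
  refine sum_chains_eq _ _ _ _ ?_ (fun L => (L.map p).prod)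
  · intro k c
    rw [satChain_iff_chain', head?_ofFn, getLast?_ofFn]
    constructor
    · rintro ⟨h1, h2, h3⟩
      exact ⟨h1, by simpa using h2, by simpa using h3⟩
    · rintro ⟨h1, h2, h3⟩
      exact ⟨h1, by simpa using h2, by simpa using h3⟩

end ChainSets
section Recursions

attribute [local instance] Classical.propDecidable
set_option linter.unusedSectionVars false

lemma Dset_filter_len_one (x : P) :
    (Dset x).filter (fun L => L.length = 1) = if IsMax x then {[x]} else (∅ : Finset (List P)) := by
  ext L
  simp only [Finset.mem_filter, mem_Dset]
  constructor
  · rintro ⟨⟨hc, hh, hl⟩, hlen⟩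
    obtain ⟨a, rfl⟩ : ∃ a, L = [a] := by
      cases L with
      | nil => simp at hh
      | cons a t =>
        cases t with
        | nil => exact ⟨a, rfl⟩
        | cons b t' => simp at hlen
    simp only [List.head?_cons, Option.some.injEq] at hh
    have hm : IsMax x := hl x (by simp [hh])
    rw [if_pos hm]
    simp [hh]
  · intro hL
    split_ifs at hL with hmax
    · simp only [Finset.mem_singleton] at hL
      subst hL
      refine ⟨⟨List.isChain_singleton _, rfl, ?_⟩, rfl⟩
      intro z hz
      simp only [List.getLast?_singleton, Option.mem_def, Option.some.injEq] at hz
      subst hz; exact hmax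
    · simp at hL

lemma Uset_filter_len_one (x : P) :
    (Uset x).filter (fun L => L.length = 1) = if IsMin x then {[x]} else (∅ : Finset (List P)) := by
  ext L
  simp only [Finset.mem_filter, mem_Uset]
  constructor
  · rintro ⟨⟨hc, hh, hl⟩, hlen⟩
    obtain ⟨a, rfl⟩ : ∃ a, L = [a] := by
      cases L with
      | nil => simp at hl
      | cons a t =>
        cases t with
        | nil => exact ⟨a, rfl⟩
        | cons b t' => simp at hlen
    simp only [List.getLast?_singleton, Option.some.injEq] at hl
    have hm : IsMin x := hh x (by simp [hl])
    rw [if_pos hm]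
    simp [hl]
  · intro hL
    split_ifs at hL with hmin
    · simp only [Finset.mem_singleton] at hL
      subst hL
      refine ⟨⟨List.isChain_singleton _, ?_, by simp⟩, rfl⟩
      intro z hz
      simp only [List.head?_cons, Option.mem_def, Option.some.injEq] at hz
      subst hz; exact hmin
    · simp at hL

lemma DnL_rec (p : P → ℝ) (x : P) :
    DnL p x = p x * ((if IsMax x then 1 else 0) +
      ∑ y ∈ Finset.univ.filter (fun y => x ⋖ y), DnL p y) := by
  have hsplit := Finset.sum_filter_add_sum_filter_not (Dset x) (fun L => L.length = 1)
    (fun L => (L.map p).prod)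
  have hA : ∑ L ∈ (Dset x).filter (fun L => L.length = 1), (L.map p).prod
      = if IsMax x then p x else 0 := by
    rw [Dset_filter_len_one]
    split_ifs <;> simp
  have hdisj : (↑(Finset.univ.filter (fun y => x ⋖ y)) : Set P).PairwiseDisjoint Dset := by
    intro a _ b _ hab
    simp only [Function.onFun, Finset.disjoint_left]
    intro L hLa hLb
    rw [mem_Dset] at hLa hLb
    exact hab (by rw [← Option.some.injEq, ← hLa.2.1, hLb.2.1])
  have hB : ∑ L ∈ (Dset x).filter (fun L => ¬L.length = 1), (L.map p).prod
      = ∑ y ∈ Finset.univ.filter (fun y => x ⋖ y), p x * DnL p y := by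
    have : ∑ y ∈ Finset.univ.filter (fun y => x ⋖ y), p x * DnL p y
        = ∑ M ∈ (Finset.univ.filter (fun y => x ⋖ y)).biUnion Dset, p x * (M.map p).prod := by
      rw [Finset.sum_biUnion hdisj]
      exact Finset.sum_congr rfl fun y _ => by rw [DnL, Finset.mul_sum]
    rw [this]
    refine Finset.sum_nbij' (fun L => L.tail) (fun M => x :: M) ?_ ?_ ?_ ?_ ?_
    · intro L hL
      simp only [Finset.mem_filter, mem_Dset] at hL
      obtain ⟨⟨hc, hh, hl⟩, hlen⟩ := hL
      obtain ⟨M, rfl⟩ : ∃ M, L = x :: M := by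
        cases L with
        | nil => simp at hh
        | cons a t =>
          simp only [List.head?_cons, Option.some.injEq] at hh
          exact ⟨t, by rw [hh]⟩
      obtain ⟨b, M', rfl⟩ : ∃ b M', M = b :: M' := by
        cases M with
        | nil => simp at hlen
        | cons b M' => exact ⟨b, M', rfl⟩
      change List.IsChain _ (x :: b :: M') at hc
      rw [List.isChain_cons_cons] at hc
      simp only [Finset.mem_biUnion, Finset.mem_filter, Finset.mem_univ, true_and]
      refine ⟨b, hc.1, ?_⟩
      rw [mem_Dset]
      refine ⟨hc.2, rfl, ?_⟩
      rwa [List.getLast?_cons_cons] at hl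
    · intro M hM
      simp only [Finset.mem_biUnion, Finset.mem_filter, Finset.mem_univ, true_and] at hM
      obtain ⟨y, hxy, hM⟩ := hM
      rw [mem_Dset] at hM
      obtain ⟨hc, hh, hl⟩ := hM
      obtain ⟨M', rfl⟩ : ∃ M', M = y :: M' := by
        cases M with
        | nil => simp at hh
        | cons a t =>
          simp only [List.head?_cons, Option.some.injEq] at hh
          exact ⟨t, by rw [hh]⟩
      simp only [Finset.mem_filter, mem_Dset]
      refine ⟨⟨List.isChain_cons_cons.mpr ⟨hxy, hc⟩, rfl, ?_⟩, by simp⟩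
      rwa [List.getLast?_cons_cons]
    · intro L hL
      simp only [Finset.mem_filter, mem_Dset] at hL
      cases L with
      | nil => simp at hL
      | cons a t =>
        simp only [List.head?_cons, Option.some.injEq] at hL
        simp only [List.tail_cons, hL.1.2.1]
    · intro M _
      rfl
    · intro L hL
      simp only [Finset.mem_filter, mem_Dset] at hL
      cases L with
      | nil => simp at hL
      | cons a t =>
        simp only [List.head?_cons, Option.some.injEq] at hL
        simp only [List.tail_cons, List.map_cons, List.prod_cons, hL.1.2.1]
  rw [DnL, ← hsplit, hA, hB, ← Finset.mul_sum, mul_add, mul_ite, mul_one, mul_zero]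

lemma UpL_rec (p : P → ℝ) (x : P) :
    UpL p x = p x * ((if IsMin x then 1 else 0) +
      ∑ y ∈ Finset.univ.filter (fun y => y ⋖ x), UpL p y) := by
  have hsplit := Finset.sum_filter_add_sum_filter_not (Uset x) (fun L => L.length = 1)
    (fun L => (L.map p).prod)
  have hA : ∑ L ∈ (Uset x).filter (fun L => L.length = 1), (L.map p).prod
      = if IsMin x then p x else 0 := by
    rw [Uset_filter_len_one]
    split_ifs <;> simp
  have hdisj : (↑(Finset.univ.filter (fun y => y ⋖ x)) : Set P).PairwiseDisjoint Uset := by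
    intro a _ b _ hab
    simp only [Function.onFun, Finset.disjoint_left]
    intro L hLa hLb
    rw [mem_Uset] at hLa hLb
    exact hab (by rw [← Option.some.injEq, ← hLa.2.2, hLb.2.2])
  have hB : ∑ L ∈ (Uset x).filter (fun L => ¬L.length = 1), (L.map p).prod
      = ∑ y ∈ Finset.univ.filter (fun y => y ⋖ x), UpL p y * p x := by
    have : ∑ y ∈ Finset.univ.filter (fun y => y ⋖ x), UpL p y * p x
        = ∑ M ∈ (Finset.univ.filter (fun y => y ⋖ x)).biUnion Uset, (M.map p).prod * p x := by
      rw [Finset.sum_biUnion hdisj]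
      exact Finset.sum_congr rfl fun y _ => by rw [UpL, Finset.sum_mul]
    rw [this]
    refine Finset.sum_nbij' (fun L => L.dropLast) (fun M => M ++ [x]) ?_ ?_ ?_ ?_ ?_
    · intro L hL
      simp only [Finset.mem_filter, mem_Uset] at hL
      obtain ⟨⟨hc, hh, hl⟩, hlen⟩ := hL
      have hne : L ≠ [] := by intro h; rw [h] at hl; simp at hl
      have hL2 : L.dropLast ≠ [] := by
        intro h
        have := List.length_dropLast (xs := L)
        rw [h] at this
        cases L with
        | nil => exact hne rfl
        | cons a t =>
          simp only [List.length_nil] at this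
          have : t.length = 0 := by simpa using this.symm
          exact hlen (by simp [this])
      have hgl : L.getLast hne = x := by
        have := L.getLast?_eq_getLast hne
        rw [hl] at this
        exact (Option.some.injEq _ _ ▸ this.symm :)
      have hsplitL : L.dropLast ++ [x] = L := by
        rw [← hgl]; exact List.dropLast_append_getLast hne
      have hcM : L.dropLast.Chain' (· ⋖ ·) := hc.prefix (List.dropLast_prefix L)
      have hlink : ∀ z ∈ L.dropLast.getLast?, z ⋖ x := by
        have := List.isChain_append.mp (hsplitL ▸ hc)
        intro z hz
        exact this.2.2 z hz x (by simp)
      obtain ⟨y, hy⟩ : ∃ y, L.dropLast.getLast? = some y := by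
        cases hM : L.dropLast.getLast? with
        | none => exact absurd (List.getLast?_eq_none_iff.mp hM) hL2
        | some y => exact ⟨y, rfl⟩
      simp only [Finset.mem_biUnion, Finset.mem_filter, Finset.mem_univ, true_and]
      refine ⟨y, hlink y (by rw [hy]; rfl), ?_⟩
      rw [mem_Uset]
      refine ⟨hcM, ?_, hy⟩
      intro z hz
      apply hh
      rwa [← hsplitL, List.head?_append_of_ne_nil _ hL2]
    · intro M hM
      simp only [Finset.mem_biUnion, Finset.mem_filter, Finset.mem_univ, true_and] at hM
      obtain ⟨y, hxy, hM⟩ := hM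
      rw [mem_Uset] at hM
      obtain ⟨hc, hh, hl⟩ := hM
      have hMne : M ≠ [] := by intro h; rw [h] at hl; simp at hl
      simp only [Finset.mem_filter, mem_Uset]
      refine ⟨⟨?_, ?_, by simp⟩, ?_⟩
      · show List.IsChain _ (M ++ [x])
        rw [List.isChain_append]
        refine ⟨hc, by simp, ?_⟩
        intro z hz w hw
        simp only [List.head?_cons, Option.mem_def, Option.some.injEq] at hw
        subst hw
        rw [hl] at hz
        simp only [Option.mem_def, Option.some.injEq] at hz
        subst hz; exact hxy
      · intro z hz
        rw [List.head?_append_of_ne_nil _ hMne] at hz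
        exact hh z hz
      · have : (M ++ [x]).length = M.length + 1 := by simp
        intro hcon
        rw [this] at hcon
        have : M.length = 0 := by omega
        exact hMne (List.length_eq_zero_iff.mp this)
    · intro L hL
      simp only [Finset.mem_filter, mem_Uset] at hL
      obtain ⟨⟨hc, hh, hl⟩, hlen⟩ := hL
      have hne : L ≠ [] := by intro h; rw [h] at hl; simp at hl
      have hgl : L.getLast hne = x := by
        have := L.getLast?_eq_getLast hne
        rw [hl] at this
        exact (Option.some.injEq _ _ ▸ this.symm :)
      rw [← hgl]; exact List.dropLast_append_getLast hne
    · intro M _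
      simp
    · intro L hL
      simp only [Finset.mem_filter, mem_Uset] at hL
      obtain ⟨⟨hc, hh, hl⟩, hlen⟩ := hL
      have hne : L ≠ [] := by intro h; rw [h] at hl; simp at hl
      have hgl : L.getLast hne = x := by
        have := L.getLast?_eq_getLast hne
        rw [hl] at this
        exact (Option.some.injEq _ _ ▸ this.symm :)
      have hsplitL : L.dropLast ++ [x] = L := by
        rw [← hgl]; exact List.dropLast_append_getLast hne
      conv_lhs => rw [← hsplitL]
      simp
  rw [UpL, ← hsplit, hA, hB]
  have : ∑ y ∈ Finset.univ.filter (fun y => y ⋖ x), UpL p y * p x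
      = (∑ y ∈ Finset.univ.filter (fun y => y ⋖ x), UpL p y) * p x := by
    rw [Finset.sum_mul]
  rw [this, mul_add, mul_ite, mul_one, mul_zero]
  split_ifs <;> ring

end Recursions
section Factorization

attribute [local instance] Classical.propDecidable
set_option linter.unusedSectionVars false

lemma ex_cons_of_head? {L : List P} {x : P} (h : L.head? = some x) : ∃ T, L = x :: T := by
  cases L with
  | nil => simp at h
  | cons a t =>
    simp only [List.head?_cons, Option.some.injEq] at h
    exact ⟨t, by rw [h]⟩

lemma ne_nil_of_getLast? {L : List P} {x : P} (h : L.getLast? = some x) : L ≠ [] := by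
  intro hL; rw [hL] at h; simp at h

lemma getLast_eq_of_getLast? {L : List P} {x : P} (h : L.getLast? = some x) (hne : L ≠ []) :
    L.getLast hne = x := by
  have := L.getLast?_eq_getLast hne
  rw [h] at this
  exact (Option.some.injEq _ _).mp this.symm

lemma Mset_split {L : List P} {v : P} (hL : L ∈ Mset v) :
    L.take (L.idxOf v + 1) ∈ Uset v ∧ L.drop (L.idxOf v) ∈ Dset v ∧
      L.take (L.idxOf v + 1) ++ (L.drop (L.idxOf v)).tail = L := by
  obtain ⟨hc, hmin, hmax, hv⟩ := mem_Mset.mp hL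
  set i := L.idxOf v with hidef
  have hilt : i < L.length := List.idxOf_lt_length_iff.mpr hv
  have hgi : L[i]? = some v := by
    rw [List.getElem?_eq_getElem hilt]
    exact congrArg some (List.idxOf_get hilt)
  have hlenA : (L.take (i + 1)).length = i + 1 := by
    rw [List.length_take]; omega
  have hAlast : (L.take (i + 1)).getLast? = some v := by
    rw [List.getLast?_eq_getElem?, hlenA, Nat.add_sub_cancel, List.getElem?_take,
      if_pos (Nat.lt_succ_self i)]
    exact hgi
  have hAhead : (L.take (i + 1)).head? = L.head? := by
    rw [List.head?_take, if_neg (by omega)]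
  have hBhead : (L.drop i).head? = some v := by
    rw [List.head?_drop]; exact hgi
  have hBne : L.drop i ≠ [] := by
    intro h; rw [h] at hBhead; simp at hBhead
  have hBlast : (L.drop i).getLast? = L.getLast? := by
    rw [List.getLast?_eq_getElem?, List.getLast?_eq_getElem?, List.getElem?_drop,
      List.length_drop]
    congr 1
    omega
  refine ⟨?_, ?_, ?_⟩
  · rw [mem_Uset]
    exact ⟨hc.prefix (List.take_prefix _ _), fun z hz => hmin z (hAhead ▸ hz), hAlast⟩
  · rw [mem_Dset]
    exact ⟨hc.suffix (List.drop_suffix _ _), hBhead, fun z hz => hmax z (hBlast ▸ hz)⟩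
  · rw [List.tail_drop, List.take_append_drop]

lemma glue_mem {A B : List P} {v : P} (hA : A ∈ Uset v) (hB : B ∈ Dset v) :
    A ++ B.tail ∈ Mset v ∧ (A ++ B.tail).idxOf v = A.length - 1 := by
  obtain ⟨hcA, hminA, hlastA⟩ := mem_Uset.mp hA
  obtain ⟨hcB, hheadB, hmaxB⟩ := mem_Dset.mp hB
  have hAne : A ≠ [] := ne_nil_of_getLast? hlastA
  obtain ⟨T, rfl⟩ := ex_cons_of_head? hheadB
  simp only [List.tail_cons]
  have hgl : A.getLast hAne = v := getLast_eq_of_getLast? hlastA hAne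
  have hAD : A.dropLast ++ [v] = A := by
    rw [← hgl]; exact List.dropLast_append_getLast hAne
  have hvD : v ∉ A.dropLast := by
    have hnd : A.Nodup := chain'_nodup hcA
    rw [← hAD] at hnd
    rw [List.nodup_append] at hnd
    intro h
    exact hnd.2.2 v h v (by simp) rfl
  have hlink : ∀ y ∈ T.head?, v ⋖ y := (List.isChain_cons.mp hcB).1
  have hcT : T.Chain' (· ⋖ ·) := (List.isChain_cons.mp hcB).2
  have hglchain : (A ++ T).Chain' (· ⋖ ·) := by
    show List.IsChain _ (A ++ T)
    rw [List.isChain_append]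
    refine ⟨hcA, hcT, fun z hz y hy => ?_⟩
    rw [hlastA] at hz
    simp only [Option.mem_def, Option.some.injEq] at hz
    subst hz
    exact hlink y hy
  have hvmem : v ∈ A ++ T := List.mem_append_left _ (hgl ▸ List.getLast_mem hAne)
  constructor
  · rw [mem_Mset]
    refine ⟨hglchain, ?_, ?_, hvmem⟩
    · intro z hz
      rw [List.head?_append_of_ne_nil _ hAne] at hz
      exact hminA z hz
    · intro z hz
      cases T with
      | nil =>
        rw [List.append_nil] at hz
        rw [hlastA] at hz
        simp only [Option.mem_def, Option.some.injEq] at hz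
        subst hz
        exact hmaxB v (by simp)
      | cons t T' =>
        apply hmaxB
        rw [List.getLast?_cons_cons]
        rwa [List.getLast?_append_of_ne_nil _ (by simp)] at hz
  · conv_lhs => rw [← hAD, List.append_assoc]
    rw [List.idxOf_append_of_notMem hvD]
    simp only [List.singleton_append, List.idxOf_cons_self, Nat.add_zero]
    rw [← hAD]
    simp

lemma upsilon_factor (p : P → ℝ) (v : P) :
    Upsilon p v * p v = UpL p v * DnL p v := by
  rw [upsilon_eq_sum_Mset, UpL, DnL, Finset.sum_mul, Finset.sum_mul_sum,
    ← Finset.sum_product']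
  refine Finset.sum_nbij' (fun L => (L.take (L.idxOf v + 1), L.drop (L.idxOf v)))
    (fun AB => AB.1 ++ AB.2.tail) ?_ ?_ ?_ ?_ ?_
  · intro L hL
    obtain ⟨h1, h2, _⟩ := Mset_split hL
    exact Finset.mem_product.mpr ⟨h1, h2⟩
  · intro AB hAB
    obtain ⟨h1, h2⟩ := Finset.mem_product.mp hAB
    exact (glue_mem h1 h2).1
  · intro L hL
    obtain ⟨h1, h2, h3⟩ := Mset_split hL
    exact h3
  · intro AB hAB
    obtain ⟨h1, h2⟩ := Finset.mem_product.mp hAB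
    obtain ⟨hmem, hidx⟩ := glue_mem h1 h2
    have hAne : AB.1 ≠ [] := ne_nil_of_getLast? (mem_Uset.mp h1).2.2
    have hAlen : 0 < AB.1.length := List.length_pos_iff.mpr hAne
    obtain ⟨T, hT⟩ := ex_cons_of_head? (mem_Dset.mp h2).2.1
    have e1 : AB.1 ++ AB.2.tail = AB.1 ++ T := by rw [hT]; rfl
    have h1' : (AB.1 ++ AB.2.tail).idxOf v + 1 = AB.1.length := by omega
    refine Prod.ext ?_ ?_
    · show (AB.1 ++ AB.2.tail).take ((AB.1 ++ AB.2.tail).idxOf v + 1) = AB.1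
      rw [h1', e1, List.take_left' rfl]
    · show (AB.1 ++ AB.2.tail).drop ((AB.1 ++ AB.2.tail).idxOf v) = AB.2
      have hAD : AB.1.dropLast ++ [v] = AB.1 := by
        rw [← getLast_eq_of_getLast? (mem_Uset.mp h1).2.2 hAne]
        exact List.dropLast_append_getLast hAne
      obtain ⟨D, hD⟩ : ∃ D, D ++ [v] = AB.1 := ⟨AB.1.dropLast, hAD⟩
      rw [hidx, e1, ← hD, List.append_assoc]
      have hDlen : (D ++ [v]).length - 1 = D.length := by simp
      rw [hDlen, List.drop_left' rfl, List.singleton_append, ← hT]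
  · intro L hL
    obtain ⟨h1, h2, h3⟩ := Mset_split hL
    obtain ⟨T, hT⟩ := ex_cons_of_head? (mem_Dset.mp h2).2.1
    rw [hT] at h3
    simp only [List.tail_cons] at h3
    calc (L.map p).prod * p v
        = ((L.take (L.idxOf v + 1) ++ T).map p).prod * p v := by rw [h3]
      _ = ((L.take (L.idxOf v + 1)).map p).prod * ((T.map p).prod * p v) := by
          rw [List.map_append, List.prod_append]; ring
      _ = ((L.take (L.idxOf v + 1)).map p).prod * ((L.drop (L.idxOf v)).map p).prod := by
          rw [hT]; simp only [List.map_cons, List.prod_cons]; ring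

end Factorization

section LocalityPositivity

attribute [local instance] Classical.propDecidable
set_option linter.unusedSectionVars false

lemma le_of_head?_mem {L : List P} (hc : L.Chain' (· ⋖ ·)) {x y : P}
    (hh : L.head? = some x) (hy : y ∈ L) : x ≤ y := by
  obtain ⟨T, rfl⟩ := ex_cons_of_head? hh
  have hp := chain'_pairwise hc
  rw [List.pairwise_cons] at hp
  rcases List.mem_cons.mp hy with h | h
  · exact le_of_eq h.symm
  · exact (hp.1 y h).le

lemma mem_le_of_getLast? : ∀ {L : List P}, L.Chain' (· ⋖ ·) → ∀ {x : P},
    L.getLast? = some x → ∀ y ∈ L, y ≤ x := by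
  intro L
  induction L with
  | nil => intro _ x hl; simp at hl
  | cons a t ih =>
    intro hc x hl y hy
    cases t with
    | nil =>
      simp only [List.getLast?_singleton, Option.some.injEq] at hl
      simp only [List.mem_singleton] at hy
      exact le_of_eq (hy.trans hl)
    | cons b t' =>
      rw [List.getLast?_cons_cons] at hl
      have hc' : (b :: t').Chain' (· ⋖ ·) := (List.isChain_cons.mp hc).2
      rcases List.mem_cons.mp hy with h | h
      · have hab : a ⋖ b := (List.isChain_cons_cons.mp hc).1
        have hbx : b ≤ x := ih hc' hl b (by simp)
        rw [h]
        exact hab.le.trans hbx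
      · exact ih hc' hl y h

lemma DnL_congr {p q : P → ℝ} {x : P} (h : ∀ y, x ≤ y → p y = q y) : DnL p x = DnL q x := by
  refine Finset.sum_congr rfl fun L hL => ?_
  obtain ⟨hc, hh, _⟩ := mem_Dset.mp hL
  congr 1
  refine List.map_congr_left fun y hy => ?_
  exact h y (le_of_head?_mem hc hh hy)

lemma UpL_congr {p q : P → ℝ} {x : P} (h : ∀ y, y ≤ x → p y = q y) : UpL p x = UpL q x := by
  refine Finset.sum_congr rfl fun L hL => ?_
  obtain ⟨hc, _, hl⟩ := mem_Uset.mp hL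
  congr 1
  refine List.map_congr_left fun y hy => ?_
  exact h y (mem_le_of_getLast? hc hl y hy)

lemma singleton_mem_Dset {v : P} (hm : IsMax v) : [v] ∈ Dset v := by
  rw [mem_Dset]
  refine ⟨List.isChain_singleton _, rfl, fun z hz => ?_⟩
  simp only [List.getLast?_singleton, Option.mem_def, Option.some.injEq] at hz
  exact hz ▸ hm

lemma exists_mem_Dset (v : P) : ∃ L, L ∈ Dset v := by
  have H : ∀ n (v : P), (Finset.univ.filter (fun y => v < y)).card ≤ n → ∃ L, L ∈ Dset v := by
    intro n
    induction n with
    | zero =>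
      intro v hv
      have hmax : IsMax v := by
        intro b hb
        by_contra hnb
        have : b ∈ Finset.univ.filter (fun y => v < y) := by
          simp only [Finset.mem_filter, Finset.mem_univ, true_and]
          exact lt_of_le_not_ge hb hnb
        have := Finset.card_pos.mpr ⟨b, this⟩
        omega
      exact ⟨[v], singleton_mem_Dset hmax⟩
    | succ n ih =>
      intro v hv
      by_cases hm : IsMax v
      · exact ⟨[v], singleton_mem_Dset hm⟩
      · obtain ⟨z, hz⟩ : ∃ z, v < z := by
          rw [IsMax] at hm
          push_neg at hm
          obtain ⟨b, hb, hnb⟩ := hm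
          exact ⟨b, lt_of_le_not_ge hb hnb⟩
        obtain ⟨m, hm1, hm2⟩ := Finset.exists_minimal (s := Finset.univ.filter (fun y => v < y))
          ⟨z, by simp [hz]⟩
        simp only [Finset.mem_filter, Finset.mem_univ, true_and] at hm1
        have hcov : v ⋖ m := by
          refine ⟨hm1, fun w hw hwm => ?_⟩
          exact absurd (hm2 (by simp [hw]) hwm.le) (not_le_of_gt hwm)
        have hsub : (Finset.univ.filter (fun y => m < y)).card ≤ n := by
          have hss : (Finset.univ.filter (fun y => m < y)) ⊂ (Finset.univ.filter (fun y => v < y)) := by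
            refine Finset.ssubset_iff_of_subset ?_ |>.mpr ?_
            · intro w hw
              simp only [Finset.mem_filter, Finset.mem_univ, true_and] at hw ⊢
              exact hm1.trans hw
            · exact ⟨m, by simp [hm1], by simp⟩
          have := Finset.card_lt_card hss
          omega
        obtain ⟨L, hL⟩ := ih m hsub
        obtain ⟨hc, hh, hl⟩ := mem_Dset.mp hL
        refine ⟨v :: L, mem_Dset.mpr ⟨?_, rfl, ?_⟩⟩
        · show List.IsChain _ (v :: L)
          rw [List.isChain_cons]
          refine ⟨fun y hy => ?_, hc⟩
          rw [hh] at hy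
          simp only [Option.mem_def, Option.some.injEq] at hy
          exact hy ▸ hcov
        · intro z hz
          apply hl
          obtain ⟨T, rfl⟩ := ex_cons_of_head? hh
          rwa [List.getLast?_cons_cons] at hz
  exact H _ v le_rfl

lemma map_prod_pos {p : P → ℝ} (hp : ∀ x, 0 < p x) (L : List P) : 0 < (L.map p).prod := by
  apply List.prod_pos
  intro a ha
  obtain ⟨y, _, rfl⟩ := List.mem_map.mp ha
  exact hp y

lemma DnL_pos {p : P → ℝ} (hp : ∀ x, 0 < p x) (v : P) : 0 < DnL p v := by
  obtain ⟨L, hL⟩ := exists_mem_Dset v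
  exact Finset.sum_pos' (fun M _ => (map_prod_pos hp M).le) ⟨L, hL, map_prod_pos hp L⟩

lemma lowSum_pos {f : P → ℝ} (hf : ∀ x, 0 < f x) (x : P) : 0 < lowSum f x := by
  unfold lowSum
  by_cases hm : IsMin x
  · rw [if_pos hm]
    have : (0:ℝ) ≤ ∑ y ∈ Finset.univ.filter (fun y => y ⋖ x), f y :=
      Finset.sum_nonneg fun y _ => (hf y).le
    linarith
  · rw [if_neg hm, zero_add]
    obtain ⟨z, hz⟩ : ∃ z, z < x := by
      rw [IsMin] at hm
      push_neg at hm
      obtain ⟨b, hb, hnb⟩ := hm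
      exact ⟨b, lt_of_le_not_ge hb hnb⟩
    obtain ⟨m, hm1, hm2⟩ := Finset.exists_maximal (s := Finset.univ.filter (fun y => y < x))
      ⟨z, by simp [hz]⟩
    simp only [Finset.mem_filter, Finset.mem_univ, true_and] at hm1
    have hcov : m ⋖ x := ⟨hm1, fun w hw hwm => absurd (hm2 (by simp [hwm]) hw.le) (not_le_of_gt hw)⟩
    exact Finset.sum_pos (fun y _ => hf y) ⟨m, by simp [hcov]⟩

end LocalityPositivity
section MainInduction

attribute [local instance] Classical.propDecidable
set_option linter.unusedSectionVars false

lemma linext_split {l s t : List P} {v : P} (hl : IsLinearExtension l)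
    (hst : l = s ++ v :: t) :
    (∀ y : P, y < v → y ∈ s ∧ y ∉ t) ∧ (∀ y : P, v < y → y ∈ t ∧ y ∉ s) ∧
      v ∉ s ∧ v ∉ t := by
  obtain ⟨hnd, hmem, hord⟩ := hl
  subst hst
  have hndst := hnd
  rw [List.nodup_append] at hndst
  obtain ⟨hnds, hndvt, hdisj⟩ := hndst
  have hlenv : s.length < (s ++ v :: t).length := by simp
  have hv : (s ++ v :: t)[s.length]'hlenv = v := by
    rw [List.getElem_append_right (le_refl s.length)]
    simp
  have hidx : ∀ y : P, y < v → ∀ (j : ℕ) (hj : j < (s ++ v :: t).length),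
      (s ++ v :: t)[j]'hj = y → j < s.length := by
    intro y hy j hj hjy
    have := hord j s.length hj hlenv (by rw [hjy, hv]; exact hy)
    exact this
  have hidx' : ∀ y : P, v < y → ∀ (j : ℕ) (hj : j < (s ++ v :: t).length),
      (s ++ v :: t)[j]'hj = y → s.length < j := by
    intro y hy j hj hjy
    exact hord s.length j hlenv hj (by rw [hjy, hv]; exact hy)
  have hmem_s : ∀ y : P, y < v → y ∈ s := by
    intro y hy
    obtain ⟨j, hj, hjy⟩ := List.mem_iff_getElem.mp (hmem y)
    have hjs : j < s.length := hidx y hy j hj hjy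
    rw [← hjy, List.getElem_append_left hjs]
    exact List.getElem_mem hjs
  have hmem_t : ∀ y : P, v < y → y ∈ t := by
    intro y hy
    have hyne : y ≠ v := ne_of_gt hy
    have hys : y ∉ s := by
      intro hys
      obtain ⟨i, hi, hiy⟩ := List.mem_iff_getElem.mp hys
      have hi' : i < (s ++ v :: t).length := by simp; omega
      have hgi : (s ++ v :: t)[i]'hi' = y := by
        rw [List.getElem_append_left hi]; exact hiy
      have := hidx' y hy i hi' hgi
      omega
    have hyl : y ∈ s ++ v :: t := hmem y
    rw [List.mem_append] at hyl
    rcases hyl with h | h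
    · exact absurd h hys
    · rcases List.mem_cons.mp h with h | h
      · exact absurd h hyne
      · exact h
  have hvs : v ∉ s := fun h => hdisj v h v (by simp) rfl
  have hvt : v ∉ t := by
    rw [List.nodup_cons] at hndvt
    exact hndvt.1
  refine ⟨fun y hy => ⟨hmem_s y hy, fun hyt => ?_⟩, fun y hy => ⟨hmem_t y hy, fun hys => ?_⟩,
    hvs, hvt⟩
  · exact hdisj y (hmem_s y hy) y (by simp [hyt]) rfl
  · exact hdisj y hys y (by simp [hmem_t y hy]) rfl

/-- The key `otog` induction: toggling from the top down along a linear extension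
computes `Θ ∘ Δ⁻¹ ∘ ∇`. -/
lemma otog_fold (C : ℝ) (hC : 0 < C) (f : P → ℝ) (hf : ∀ x, 0 < f x)
    (l : List P) (hl : IsLinearExtension l) :
    ∀ (t s : List P), l = s ++ t →
      List.foldr (fun v h => otog C v h) f t
        = fun v => if v ∈ t then C / DnL (nablaMap f) v else f v := by
  have hg : ∀ x, 0 < nablaMap f x := fun x => div_pos (hf x) (lowSum_pos hf x)
  intro t
  induction t with
  | nil =>
    intro s hst
    funext x
    simp
  | cons v t ih =>
    intro s hst
    obtain ⟨hlow, hhigh, hvs, hvt⟩ := linext_split hl hst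
    have hmix := ih (s ++ [v]) (by rw [hst, List.append_assoc]; rfl)
    rw [List.foldr_cons, hmix]
    set h : P → ℝ := fun y => if y ∈ t then C / DnL (nablaMap f) y else f y with hh
    have hhv : h v = f v := by rw [hh]; simp only [if_neg hvt]
    have hlowS : lowSum h v = lowSum f v := by
      unfold lowSum
      congr 1
      refine Finset.sum_congr rfl fun y hy => ?_
      simp only [Finset.mem_filter, Finset.mem_univ, true_and] at hy
      rw [hh]
      simp only [if_neg (hlow y hy.lt).2]
    have hupS : upInvSum C h v = DnL (nablaMap f) v / (nablaMap f v * C) := by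
      unfold upInvSum
      have hterm : ∀ y ∈ Finset.univ.filter (fun y => v ⋖ y),
          1 / h y = DnL (nablaMap f) y / C := by
        intro y hy
        simp only [Finset.mem_filter, Finset.mem_univ, true_and] at hy
        rw [hh]
        simp only [if_pos (hhigh y hy.lt).1, one_div_div]
      have hgne : nablaMap f v ≠ 0 := (hg v).ne'
      rw [Finset.sum_congr rfl hterm, DnL_rec (nablaMap f) v,
        mul_div_mul_left _ _ hgne, add_div, Finset.sum_div]
      congr 1
      split_ifs
      · rfl
      · simp
    funext x
    by_cases hx : x = v
    · subst hx
      have hmem' : x ∈ x :: t := by simp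
      rw [if_pos hmem']
      show (if x = x then lowSum h x / (h x * upInvSum C h x) else h x)
          = C / DnL (nablaMap f) x
      rw [if_pos rfl, hhv, hlowS, hupS]
      have hD := DnL_pos hg x
      have hnab : nablaMap f x = f x / lowSum f x := rfl
      rw [hnab]
      have h1 : f x ≠ 0 := (hf x).ne'
      have h2 : lowSum f x ≠ 0 := (lowSum_pos hf x).ne'
      have h3 : DnL (nablaMap f) x ≠ 0 := hD.ne'
      have h4 : C ≠ 0 := hC.ne'
      field_simp
    · show (if x = v then lowSum h v / (h v * upInvSum C h v) else h x)
          = if x ∈ v :: t then C / DnL (nablaMap f) x else f x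
      rw [if_neg hx, hh]
      simp only
      by_cases hxt : x ∈ t
      · rw [if_pos hxt, if_pos (by simp [hxt])]
      · rw [if_neg hxt, if_neg (by simp [hx, hxt])]

/-- `UpL` of the bottom-up rowmotion labels: `B = Θ ∘ Δ⁻¹` pointwise. -/
lemma UpL_G (C : ℝ) (hC : 0 < C) (g : P → ℝ) (hg : ∀ x, 0 < g x) :
    ∀ y : P, UpL (fun x => (C / DnL g x) / lowSum (fun z => C / DnL g z) x) y
      = C / DnL g y := by
  set TD := fun z => C / DnL g z with hTD
  have hTDpos : ∀ z, 0 < TD z := fun z => div_pos hC (DnL_pos hg z)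
  have H : ∀ (n : ℕ) (y : P), (Finset.univ.filter (fun z => z < y)).card ≤ n →
      UpL (fun x => TD x / lowSum TD x) y = C / DnL g y := by
    intro n
    induction n with
    | zero =>
      intro y hy
      rw [UpL_rec]
      have hempty : Finset.univ.filter (fun z => z ⋖ y) = ∅ := by
        rw [Finset.eq_empty_iff_forall_notMem]
        intro z hz
        simp only [Finset.mem_filter, Finset.mem_univ, true_and] at hz
        have : z ∈ Finset.univ.filter (fun w => w < y) := by simp [hz.lt]
        have := Finset.card_pos.mpr ⟨z, this⟩
        omega
      have hmin : IsMin y := by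
        intro b hb
        by_contra hnb
        have : b ∈ Finset.univ.filter (fun z => z < y) := by
          simp [lt_of_le_not_ge hb hnb]
        have := Finset.card_pos.mpr ⟨b, this⟩
        omega
      have hls : lowSum TD y = 1 := by
        unfold lowSum
        rw [if_pos hmin, hempty]
        simp
      rw [hempty, if_pos hmin]
      simp [hls]
      rfl
    | succ n ih =>
      intro y hy
      rw [UpL_rec]
      have hsum : ∑ z ∈ Finset.univ.filter (fun z => z ⋖ y),
          UpL (fun x => TD x / lowSum TD x) z
          = ∑ z ∈ Finset.univ.filter (fun z => z ⋖ y), TD z := by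
        refine Finset.sum_congr rfl fun z hz => ?_
        simp only [Finset.mem_filter, Finset.mem_univ, true_and] at hz
        have hcard : (Finset.univ.filter (fun w => w < z)).card ≤ n := by
          have hss : (Finset.univ.filter (fun w => w < z))
              ⊂ (Finset.univ.filter (fun w => w < y)) := by
            refine Finset.ssubset_iff_of_subset ?_ |>.mpr ?_
            · intro w hw
              simp only [Finset.mem_filter, Finset.mem_univ, true_and] at hw ⊢
              exact hw.trans hz.lt
            · exact ⟨z, by simp [hz.lt], by simp⟩
          have := Finset.card_lt_card hss
          omega
        rw [ih z hcard]
      rw [hsum]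
      have hlz : (if IsMin y then (1:ℝ) else 0)
          + ∑ z ∈ Finset.univ.filter (fun z => z ⋖ y), TD z = lowSum TD y := rfl
      rw [hlz]
      exact div_mul_cancel₀ (TD y) (lowSum_pos hTDpos y).ne'
  exact fun y => H _ y le_rfl

/-- The key `atog` induction step: the toggled value is the rowmotion label. -/
lemma atog_value (C : ℝ) (hC : 0 < C) (g : P → ℝ) (hg : ∀ x, 0 < g x)
    {l s t : List P} {v : P} (hl : IsLinearExtension l) (hst : l = s ++ v :: t) :
    C / Upsilon (fun x => if x ∈ s
        then (C / DnL g x) / lowSum (fun z => C / DnL g z) x else g x) v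
      = (C / DnL g v) / lowSum (fun z => C / DnL g z) v := by
  obtain ⟨hlow, hhigh, hvs, hvt⟩ := linext_split hl hst
  set TD := fun z => C / DnL g z with hTD
  set G := fun x => TD x / lowSum TD x with hG
  set mix := fun x => if x ∈ s then G x else g x with hmix
  have hTDpos : ∀ z, 0 < TD z := fun z => div_pos hC (DnL_pos hg z)
  have hfac := upsilon_factor mix v
  have hmixv : mix v = g v := by rw [hmix]; simp only [if_neg hvs]
  have hDn : DnL mix v = DnL g v := by
    refine DnL_congr fun y hy => ?_
    rcases eq_or_lt_of_le hy with h | h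
    · rw [← h, hmixv]
    · rw [hmix]
      simp only [if_neg (hhigh y h).2]
  have hUp : UpL mix v = g v * lowSum TD v := by
    rw [UpL_rec, hmixv]
    congr 1
    have hsum : ∑ y ∈ Finset.univ.filter (fun y => y ⋖ v), UpL mix y
        = ∑ y ∈ Finset.univ.filter (fun y => y ⋖ v), TD y := by
      refine Finset.sum_congr rfl fun y hy => ?_
      simp only [Finset.mem_filter, Finset.mem_univ, true_and] at hy
      have hUG : UpL mix y = UpL G y := by
        refine UpL_congr fun z hz => ?_
        have hzv : z < v := lt_of_le_of_lt hz hy.lt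
        rw [hmix]
        simp only [if_pos (hlow z hzv).1]
      rw [hUG, hG]
      exact UpL_G C hC g hg y
    rw [hsum]
    rfl
  have hUps : Upsilon mix v = lowSum TD v * DnL g v := by
    have hgv : g v ≠ 0 := (hg v).ne'
    rw [hmixv, hDn, hUp] at hfac
    have h2 : Upsilon mix v * g v = (lowSum TD v * DnL g v) * g v := by
      rw [hfac]; ring
    exact mul_right_cancel₀ hgv h2
  rw [hUps, div_div, mul_comm (DnL g v) (lowSum TD v)]

/-- The `atog` fold: antichain rowmotion from the bottom up computes `∇ ∘ Θ ∘ Δ⁻¹`. -/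
lemma atog_fold (C : ℝ) (hC : 0 < C) (g : P → ℝ) (hg : ∀ x, 0 < g x)
    (l : List P) (hl : IsLinearExtension l) :
    ∀ (t s : List P), l = s ++ t →
      List.foldl (fun h v => atog C v h)
        (fun x => if x ∈ s then (C / DnL g x) / lowSum (fun z => C / DnL g z) x else g x) t
      = fun x => if x ∈ s ++ t
          then (C / DnL g x) / lowSum (fun z => C / DnL g z) x else g x := by
  intro t
  induction t with
  | nil =>
    intro s hst
    simp
  | cons v t ih =>
    intro s hst
    rw [List.foldl_cons]
    have hstep : atog C v (fun x => if x ∈ s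
        then (C / DnL g x) / lowSum (fun z => C / DnL g z) x else g x)
        = fun x => if x ∈ s ++ [v]
            then (C / DnL g x) / lowSum (fun z => C / DnL g z) x else g x := by
      funext x
      rw [atog]
      by_cases hx : x = v
      · subst hx
        rw [if_pos rfl, if_pos (by simp)]
        exact atog_value C hC g hg hl hst
      · rw [if_neg hx]
        have hiff : x ∈ s ↔ x ∈ s ++ [v] := by
          simp only [List.mem_append, List.mem_singleton]
          constructor
          · exact fun h => Or.inl h
          · rintro (h | h)
            · exact h
            · exact absurd h hx
        exact if_congr hiff rfl rfl
    rw [hstep]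
    have := ih (s ++ [v]) (by rw [hst, List.append_assoc]; rfl)
    rw [this]
    funext x
    exact if_congr (by simp only [List.mem_append, List.mem_singleton, List.mem_cons]; tauto)
      rfl rfl

end MainInduction

/-- Birational antichain rowmotion and birational order rowmotion are
intertwined by the down transfer: `∇ ∘ BOR = BAR ∘ ∇` on positive labelings, where for a
linear extension `(x₁,…,xₙ)` of `P`, `BOR = T_{x₁} ∘ T_{x₂} ∘ ⋯ ∘ T_{xₙ}` (rightmost
applied first, toggling from top to bottom) and `BAR = τ_{xₙ} ∘ ⋯ ∘ τ_{x₂} ∘ τ_{x₁}`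
(toggling from bottom to top). -/
theorem nabla_BOR_eq_BAR_nabla (C : ℝ) (hC : 0 < C)
    (l : List P) (hl : IsLinearExtension l)
    (f : P → ℝ) (hf : ∀ x, 0 < f x) :
    nablaMap (l.foldr (fun v h => otog C v h) f) = applyATogs C l (nablaMap f) := by
  classical
  have hg : ∀ x, 0 < nablaMap f x := fun x => div_pos (hf x) (lowSum_pos hf x)
  have hBOR := otog_fold C hC f hf l hl l [] rfl
  have hBAR := atog_fold C hC (nablaMap f) hg l hl l [] rfl
  unfold applyATogs
  have hinit : (fun x : P => if x ∈ ([] : List P)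
      then (C / DnL (nablaMap f) x) / lowSum (fun z => C / DnL (nablaMap f) z) x
      else nablaMap f x) = nablaMap f := by
    funext x
    simp
  rw [hinit] at hBAR
  have hfun : (fun v => if v ∈ l then C / DnL (nablaMap f) v else f v)
      = fun v : P => C / DnL (nablaMap f) v := by
    funext y
    rw [if_pos (hl.2.1 y)]
  rw [hBOR, hBAR, hfun]
  funext x
  show nablaMap (fun v => C / DnL (nablaMap f) v) x
      = if x ∈ [] ++ l
        then (C / DnL (nablaMap f) x) / lowSum (fun z => C / DnL (nablaMap f) z) x
        else nablaMap f x
  rw [if_pos (show x ∈ [] ++ l from by simpa using hl.2.1 x)]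
  rfl
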